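/- arXiv:0903.1486 — 2 statements merged into one kernel-verified Lean document; each statement's English description precedes it below -/
import Mathlib

section
/- Suppose |A| is odd. For every automorphism α ∈ Aut(K,e), the Weil operator W(σ(α)) associated to the lift σ(α) : 𝒲_k ↦ 𝒲_{α(k)} satisfies |tr W(σ(α))|² = |K^α|, the number of fixed points of α in K. -/
/-!
Setup: normalized Weyl operators for a finite abelian group of odd order.
`half` denotes the inverse of multiplication by 2 on `A`.
-/

noncomputable section

variable (A : Type*) [AddCommGroup A] [Fintype A]

/-- `L²(A)`, the Hilbert space of complex-valued functions on `A`. -/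
abbrev L2 := EuclideanSpace ℂ A

/-- The parameter group `K = A × Â`. -/
abbrev Kgrp := A × Additive (AddChar A Circle)

variable {A}

/-- Weyl operator `W_{(x,χ)} = T_x M_χ` on `L²(A)`. -/
def Weyl (k : Kgrp A) : Module.End ℂ (L2 A) where
  toFun f := WithLp.toLp 2 (fun u => (Additive.toMul k.2 (u - k.1) : ℂ) * f (u - k.1))
  map_add' f g := by ext u; simp [mul_add]
  map_smul' c f := by ext u; simp [smul_eq_mul]; ring

/-- Normalized Weyl operator `𝒲_{(x,χ)} = χ(x/2) W_{(x,χ)}`, where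
`half = (x ↦ x/2)` is the inverse of doubling on `A`. -/
def NWeyl (half : A → A) (k : Kgrp A) : Module.End ℂ (L2 A) :=
  (Additive.toMul k.2 (half k.1) : ℂ) • Weyl k

/-- The normalized cocycle `c̃(k,l) = χ(y/2) λ(x/2)⁻¹` for `k = (x,χ)`,
`l = (y,λ)`. -/
def ctilde (half : A → A) (k l : Kgrp A) : Circle :=
  Additive.toMul k.2 (half l.1) * (Additive.toMul l.2 (half k.1))⁻¹

/-- The commutator pairing `e(k,l) = χ(y) λ(x)⁻¹` on `K = A × Â`. -/
def commPairing {A : Type*} [AddCommGroup A] (k l : Kgrp A) : Circle :=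
  Additive.toMul k.2 l.1 * (Additive.toMul l.2 k.1)⁻¹

/-! ### Auxiliary material for the proof -/

noncomputable instance : Fintype (AddChar A Circle) :=
  Fintype.ofEquiv _ (AddChar.circleEquivComplex (α := A)).toEquiv.symm

lemma sum_nweyl_apply (g : Kgrp A → ℂ) (half : A → A) (f : L2 A) (u : A) :
    ((∑ k : Kgrp A, g k • NWeyl half k) f) u
      = ∑ k : Kgrp A, g k * (Additive.toMul k.2 (half k.1) : ℂ)
          * (Additive.toMul k.2 (u - k.1) : ℂ) * f (u - k.1) := by
  rw [LinearMap.sum_apply]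
  rw [show ((∑ k : Kgrp A, (g k • NWeyl half k) f) u)
      = ∑ k : Kgrp A, ((g k • NWeyl half k) f) u from
    by rw [WithLp.ofLp_sum]; exact Finset.sum_apply u Finset.univ _]
  refine Finset.sum_congr rfl fun k _ => ?_
  show (g k • ((Additive.toMul k.2 (half k.1) : ℂ) • Weyl k)) f u = _
  simp [Weyl, smul_eq_mul]
  ring

lemma char_li : LinearIndependent ℂ
    (fun χ : Additive (AddChar A Circle) => (fun v => ((Additive.toMul χ) v : ℂ) : A → ℂ)) := by
  have h1 := AddChar.linearIndependent A ℂ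
  have h2 := h1.comp
    (fun χ : Additive (AddChar A Circle) => AddChar.circleEquivComplex (Additive.toMul χ))
    (fun a b hab => by
      have := AddChar.circleEquivComplex.injective hab
      exact Additive.toMul.injective this)
  exact h2

lemma nweyl_li (half : A → A) :
    LinearIndependent ℂ (fun k : Kgrp A => NWeyl half k) := by
  classical
  rw [Fintype.linearIndependent_iff]
  intro g hg
  rintro ⟨x, χ₀⟩
  have key : ∀ v : A, ∑ χ : Additive (AddChar A Circle),
      (g (x, χ) * (Additive.toMul χ (half x) : ℂ)) * (Additive.toMul χ v : ℂ) = 0 := by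
    intro v
    have h := sum_nweyl_apply g half (EuclideanSpace.single v (1:ℂ)) (v + x)
    rw [hg] at h
    have h0 : ((0 : Module.End ℂ (L2 A)) (EuclideanSpace.single v (1:ℂ))) (v + x) = 0 := rfl
    rw [h0] at h
    rw [Fintype.sum_prod_type] at h
    rw [Finset.sum_eq_single_of_mem x (Finset.mem_univ x)] at h
    · simp only [add_sub_cancel_right, EuclideanSpace.single_apply, eq_self_iff_true, if_true,
        mul_one] at h
      exact h.symm
    · intro y _ hy
      refine Finset.sum_eq_zero fun χ _ => ?_
      rw [EuclideanSpace.single_apply, if_neg, mul_zero]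
      intro hvy
      exact hy (add_left_cancel (sub_eq_iff_eq_add.mp hvy)).symm
  have hli := Fintype.linearIndependent_iff.mp char_li
    (fun χ : Additive (AddChar A Circle) => g (x, χ) * (Additive.toMul χ (half x) : ℂ))
    (by
      funext v
      rw [show ((∑ χ : Additive (AddChar A Circle),
          (g (x, χ) * (Additive.toMul χ (half x) : ℂ)) •
            (fun v => ((Additive.toMul χ) v : ℂ) : A → ℂ)) v)
          = ∑ χ : Additive (AddChar A Circle),
            (g (x, χ) * (Additive.toMul χ (half x) : ℂ)) * (Additive.toMul χ v : ℂ) from by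
        rw [Finset.sum_apply]; rfl]
      exact key v) χ₀
  rcases mul_eq_zero.mp hli with h' | h'
  · exact h'
  · exact absurd h' (Circle.coe_ne_zero _)

lemma card_Kgrp_eq_finrank :
    Fintype.card (Kgrp A) = Module.finrank ℂ (Module.End ℂ (L2 A)) := by
  rw [Module.finrank_linearMap, finrank_euclideanSpace, Fintype.card_prod]
  congr 1
  rw [show Fintype.card (Additive (AddChar A Circle)) = Fintype.card (AddChar A Circle) from
    Fintype.card_congr Additive.toMul]
  rw [Fintype.card_congr (AddChar.circleEquivComplex (α := A)).toEquiv]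
  exact AddChar.card_eq

lemma stdBasis_repr (x : Matrix A A ℂ) (p : A × A) :
    (Matrix.stdBasis ℂ A A).repr x p = x p.1 p.2 := by
  classical
  have hx : x = ∑ p : A × A, x p.1 p.2 • Matrix.stdBasis ℂ A A p := by
    rw [Finset.sum_congr rfl (fun p _ => by
      rw [Matrix.stdBasis_eq_single, Matrix.smul_single, smul_eq_mul, mul_one])]
    rw [Fintype.sum_prod_type]
    exact Matrix.matrix_eq_sum_single x
  conv_lhs => rw [hx]
  rw [Module.Basis.repr_sum_self]

lemma trace_mulLeft_mulRight (W W' : Module.End ℂ (L2 A)) :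
    LinearMap.trace ℂ _ ((LinearMap.mulLeft ℂ W) ∘ₗ (LinearMap.mulRight ℂ W'))
      = LinearMap.trace ℂ _ W * LinearMap.trace ℂ _ W' := by
  classical
  set b2 : Module.Basis A ℂ (L2 A) := (EuclideanSpace.basisFun A ℂ).toBasis with hb2
  set E : Module.End ℂ (L2 A) ≃ₗ[ℂ] Matrix A A ℂ := LinearMap.toMatrix b2 b2 with hE
  set Φ : Module.End ℂ (Module.End ℂ (L2 A)) :=
    (LinearMap.mulLeft ℂ W) ∘ₗ (LinearMap.mulRight ℂ W') with hΦ
  set M : Matrix A A ℂ := LinearMap.toMatrix b2 b2 W with hM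
  set M' : Matrix A A ℂ := LinearMap.toMatrix b2 b2 W' with hM'
  rw [← LinearMap.trace_conj' Φ E]
  rw [LinearMap.trace_eq_matrix_trace ℂ (Matrix.stdBasis ℂ A A)]
  have hΨ : ∀ p : A × A, (E.conj Φ) (Matrix.stdBasis ℂ A A p)
      = M * (Matrix.single p.1 p.2 1 * M') := by
    intro p
    rw [Matrix.stdBasis_eq_single, LinearEquiv.conj_apply]
    show E (W * (E.symm (Matrix.single p.1 p.2 1) * W')) = _
    rw [hE]
    rw [show W * (E.symm (Matrix.single p.1 p.2 1) * W')
        = W * E.symm (Matrix.single p.1 p.2 1) * W' from (mul_assoc _ _ _).symm]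
    rw [LinearMap.toMatrix_mul b2, LinearMap.toMatrix_mul b2]
    rw [show E.symm (Matrix.single p.1 p.2 1)
        = Matrix.toLin b2 b2 (Matrix.single p.1 p.2 1) from rfl]
    rw [LinearMap.toMatrix_toLin, Matrix.mul_assoc]
  have entry : ∀ i j : A, (M * (Matrix.single i j (1:ℂ) * M')) i j
      = M i i * M' j j := by
    intro i j
    rw [← Matrix.mul_assoc, Matrix.mul_apply]
    rw [Finset.sum_eq_single j]
    · rw [Matrix.mul_single_apply_same, mul_one]
    · intro c _ hc
      rw [Matrix.mul_single_apply_of_ne _ _ _ _ _ hc, zero_mul]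
    · intro hj; exact absurd (Finset.mem_univ j) hj
  have : Matrix.trace (LinearMap.toMatrix (Matrix.stdBasis ℂ A A) (Matrix.stdBasis ℂ A A)
      (E.conj Φ)) = ∑ p : A × A, M p.1 p.1 * M' p.2 p.2 := by
    rw [Matrix.trace]
    refine Finset.sum_congr rfl fun p _ => ?_
    rw [Matrix.diag]
    rw [LinearMap.toMatrix_apply, hΨ p, stdBasis_repr, entry]
  rw [this, LinearMap.trace_eq_matrix_trace ℂ b2 W, LinearMap.trace_eq_matrix_trace ℂ b2 W',
    Matrix.trace, Matrix.trace, Finset.sum_mul_sum]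
  exact Fintype.sum_prod_type (f := fun p : A × A => M p.1 p.1 * M' p.2 p.2)

lemma trace_star_end (W : Module.End ℂ (L2 A)) :
    LinearMap.trace ℂ _ (star W) = starRingEnd ℂ (LinearMap.trace ℂ _ W) := by
  classical
  set v := EuclideanSpace.basisFun A ℂ
  rw [LinearMap.star_eq_adjoint, LinearMap.trace_eq_matrix_trace ℂ v.toBasis,
    LinearMap.toMatrix_adjoint, Matrix.trace_conjTranspose,
    LinearMap.trace_eq_matrix_trace ℂ v.toBasis]
  rfl

/-- if `|A|` is odd and `α ∈ Aut(K,e)`, any unitary operator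
`W(σ(α))` with `W(σ(α)) 𝒲_k W(σ(α))⁻¹ = 𝒲_{α(k)}` satisfies
`|tr W(σ(α))|² = |K^α|`. -/
theorem abs_trace_weil_eq_card_fixed (A : Type*) [AddCommGroup A] [Fintype A]
    (hodd : Odd (Fintype.card A)) (half : A → A)
    (hhalf : ∀ x : A, half x + half x = x)
    (α : AddAut (Kgrp A))
    (hα : ∀ k l : Kgrp A, commPairing (α k) (α l) = commPairing k l)
    (W : Module.End ℂ (L2 A)) (hWu : W ∈ unitary (Module.End ℂ (L2 A)))
    (hint : ∀ k : Kgrp A, W * NWeyl half k = NWeyl half (α k) * W) :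
    (‖LinearMap.trace ℂ (L2 A) W‖) ^ 2 =
      (Nat.card {k : Kgrp A // α k = k} : ℝ) := by
  classical
  have hWu' := Unitary.mem_iff.mp hWu
  set b : Module.Basis (Kgrp A) ℂ (Module.End ℂ (L2 A)) :=
    basisOfLinearIndependentOfCardEqFinrank (nweyl_li half) card_Kgrp_eq_finrank with hb
  have hbk : ∀ k : Kgrp A, b k = NWeyl half k := by
    intro k
    rw [hb, coe_basisOfLinearIndependentOfCardEqFinrank]
  set Φ : Module.End ℂ (Module.End ℂ (L2 A)) :=
    (LinearMap.mulLeft ℂ W) ∘ₗ (LinearMap.mulRight ℂ (star W)) with hΦdef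
  have hΦ : ∀ k : Kgrp A, Φ (NWeyl half k) = NWeyl half (α k) := by
    intro k
    show W * (NWeyl half k * star W) = _
    rw [← mul_assoc, hint k, mul_assoc, hWu'.2, mul_one]
  have h1 : LinearMap.trace ℂ _ Φ = (Nat.card {k : Kgrp A // α k = k} : ℂ) := by
    rw [LinearMap.trace_eq_matrix_trace ℂ b, Matrix.trace]
    have hdiag : ∀ k : Kgrp A, (LinearMap.toMatrix b b Φ).diag k
        = if α k = k then (1 : ℂ) else 0 := by
      intro k
      rw [Matrix.diag, LinearMap.toMatrix_apply, hbk k, hΦ k, ← hbk (α k),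
        Module.Basis.repr_self, Finsupp.single_apply]
    rw [Finset.sum_congr rfl fun k _ => hdiag k, Finset.sum_boole,
      Nat.card_eq_fintype_card, Fintype.card_subtype]
  have h2 : LinearMap.trace ℂ _ Φ
      = LinearMap.trace ℂ _ W * starRingEnd ℂ (LinearMap.trace ℂ _ W) := by
    rw [hΦdef, trace_mulLeft_mulRight, trace_star_end]
  have h3 : ((‖LinearMap.trace ℂ (L2 A) W‖) ^ 2 : ℂ)
      = ((Nat.card {k : Kgrp A // α k = k} : ℝ) : ℂ) := by
    rw [Complex.ofReal_natCast, ← h1, h2, Complex.mul_conj]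
    norm_cast
    exact Complex.sq_norm _
  exact_mod_cast h3
end
end

section
/- Suppose |A| is odd and let δ_K = Σ_{k∈K} 𝒲_k acting on L²(A). Then (δ_K f)(u) = √|K| · f(−u) for all f ∈ L²(A) and u ∈ A. Consequently ε_± = (Id ± δ_K/√|K|)/2 are orthogonal projections onto the subspaces of even and odd functions respectively, and are orthogonal idempotents summing to the identity. -/
/-!
Setup: normalized Weyl operators for a finite abelian group of odd order.
`half` denotes the inverse of multiplication by 2 on `A`.
-/

noncomputable section

variable (A : Type*) [AddCommGroup A] [Fintype A]

variable {A}

variable (A) in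
/-- The subspace of even functions in `L²(A)`. -/
def evenSubmodule : Submodule ℂ (L2 A) where
  carrier := {f | ∀ u : A, f (-u) = f u}
  add_mem' hf hg u := by simp [hf u, hg u]
  zero_mem' u := rfl
  smul_mem' c f hf u := by simp [hf u]

variable (A) in
/-- The subspace of odd functions in `L²(A)`. -/
def oddSubmodule : Submodule ℂ (L2 A) where
  carrier := {f | ∀ u : A, f (-u) = -f u}
  add_mem' hf hg u := by simp [hf u, hg u]; ring
  zero_mem' u := by simp
  smul_mem' c f hf u := by simp [hf u]


/-- The reflection operator `(R f)(u) = f(-u)` on `L²(A)`. -/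
def reflOp (A : Type*) [AddCommGroup A] [Fintype A] : Module.End ℂ (L2 A) where
  toFun f := WithLp.toLp 2 (fun u => f (-u))
  map_add' _ _ := rfl
  map_smul' _ _ := rfl

lemma reflOp_sq : reflOp A * reflOp A = 1 := by
  ext f u; show f (- -u) = f u; rw [neg_neg]

lemma reflOp_sa : IsSelfAdjoint (reflOp A) := by
  rw [LinearMap.isSelfAdjoint_iff', eq_comm, LinearMap.eq_adjoint_iff]
  intro f g
  simp only [PiLp.inner_apply, RCLike.inner_apply]
  exact Fintype.sum_equiv (Equiv.neg A) _ _
    (fun u => by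
      simp only [reflOp, Equiv.neg_apply, LinearMap.coe_mk, AddHom.coe_mk]
      show g u * (starRingEnd ℂ) (f (-u)) = g (- -u) * (starRingEnd ℂ) (f (-u))
      rw [neg_neg])

set_option maxHeartbeats 2000000 in
set_option synthInstance.maxHeartbeats 1000000 in
/-- for `|A|` odd, `δ_K = Σ_k 𝒲_k` satisfies
`(δ_K f)(u) = √|K| f(-u)`, and `ε_± = (1 ± δ_K/√|K|)/2` are orthogonal
(self-adjoint) idempotents summing to the identity, projecting onto the even
and odd functions respectively. -/
theorem deltaK_and_projections (A : Type*) [AddCommGroup A] [Fintype A]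
    [Fintype (Additive (AddChar A Circle))]
    (hodd : Odd (Fintype.card A)) (half : A → A)
    (hhalf : ∀ x : A, half x + half x = x) :
    (∀ (f : L2 A) (u : A),
      (∑ k : Kgrp A, NWeyl half k) f u =
        (Real.sqrt (Fintype.card (Kgrp A)) : ℂ) * f (-u)) ∧
    (let δK : Module.End ℂ (L2 A) := ∑ k : Kgrp A, NWeyl half k
     let εp : Module.End ℂ (L2 A) :=
       (2⁻¹ : ℂ) • (1 + ((Real.sqrt (Fintype.card (Kgrp A)) : ℂ))⁻¹ • δK)
     let εm : Module.End ℂ (L2 A) :=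
       (2⁻¹ : ℂ) • (1 - ((Real.sqrt (Fintype.card (Kgrp A)) : ℂ))⁻¹ • δK)
     εp * εp = εp ∧ εm * εm = εm ∧ εp * εm = 0 ∧ εm * εp = 0 ∧
       εp + εm = 1 ∧ IsSelfAdjoint εp ∧ IsSelfAdjoint εm ∧
       LinearMap.range εp = evenSubmodule A ∧
       LinearMap.range εm = oddSubmodule A) := by
  classical
  -- basic facts about `half`
  have hinj : Function.Injective half := fun x y h => by rw [← hhalf x, h, hhalf y]
  have hsurj : Function.Surjective half := Finite.injective_iff_surjective.mp hinj
  have hhalf2 : ∀ u : A, half (u + u) = u := by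
    intro u
    obtain ⟨x, hx⟩ := hsurj u
    rw [← hx, hhalf x]
  have hcond : ∀ x u : A, half x + (u - x) = 0 ↔ x = u + u := by
    intro x u
    obtain ⟨a, rfl⟩ : ∃ a : A, x = a + a := ⟨half x, (hhalf x).symm⟩
    rw [hhalf2]
    constructor
    · intro h
      have h2 : u - a = 0 := by rw [← h]; abel
      rw [sub_eq_zero] at h2
      rw [h2]
    · intro h
      have h2 : a = u := by
        have h3 := congrArg half h
        rwa [hhalf2, hhalf2] at h3
      rw [h2]
      abel
  -- cardinality of K
  have hcard : Fintype.card (Kgrp A) = Fintype.card A * Fintype.card A := by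
    rw [Fintype.card_prod]
    congr 1
    rw [← Nat.card_eq_fintype_card,
      Nat.card_congr ((Additive.toMul (α := AddChar A Circle)).trans
        AddChar.circleEquivComplex.toEquiv),
      Nat.card_eq_fintype_card, AddChar.card_eq]
  -- character orthogonality
  have hchar : ∀ a : A, ∑ χ : Additive (AddChar A Circle), ((Additive.toMul χ) a : ℂ)
      = if a = 0 then (Fintype.card A : ℂ) else 0 := by
    intro a
    rw [← AddChar.sum_apply_eq_ite a]
    exact Fintype.sum_equiv ((Additive.toMul (α := AddChar A Circle)).trans
      AddChar.circleEquivComplex.toEquiv) _ _ (fun χ => rfl)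
  -- the key pointwise computation
  have hkey : ∀ (f : L2 A) (u : A),
      (∑ k : Kgrp A, NWeyl half k) f u = (Fintype.card A : ℂ) * f (-u) := by
    intro f u
    have h1 : (∑ k : Kgrp A, NWeyl half k) f u
        = ∑ k : Kgrp A, (Additive.toMul k.2 (half k.1) : ℂ) *
            ((Additive.toMul k.2 (u - k.1) : ℂ) * f (u - k.1)) := by
      rw [LinearMap.sum_apply, WithLp.ofLp_sum, Finset.sum_apply]
      rfl
    rw [h1, Fintype.sum_prod_type]
    have h2 : ∀ x : A, ∑ χ : Additive (AddChar A Circle),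
        (Additive.toMul χ (half x) : ℂ) * ((Additive.toMul χ (u - x) : ℂ) * f (u - x))
        = (if x = u + u then (Fintype.card A : ℂ) else 0) * f (u - x) := by
      intro x
      calc ∑ χ : Additive (AddChar A Circle),
            (Additive.toMul χ (half x) : ℂ) * ((Additive.toMul χ (u - x) : ℂ) * f (u - x))
          = ∑ χ : Additive (AddChar A Circle),
            ((Additive.toMul χ (half x + (u - x)) : ℂ)) * f (u - x) := by
            refine Finset.sum_congr rfl fun χ _ => ?_
            rw [← mul_assoc, AddChar.map_add_eq_mul]
            norm_cast
        _ = (∑ χ : Additive (AddChar A Circle),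
              (Additive.toMul χ (half x + (u - x)) : ℂ)) * f (u - x) := by
            rw [Finset.sum_mul]
        _ = _ := by rw [hchar, hcond x u]
    rw [Finset.sum_congr rfl fun x _ => h2 x]
    simp only [ite_mul, zero_mul]
    rw [Finset.sum_ite_eq' Finset.univ (u + u) (fun x => (Fintype.card A : ℂ) * f (u - x))]
    simp only [Finset.mem_univ, if_true]
    have huu : u - (u + u) = -u := by abel
    rw [huu]
  -- the square root of |K|
  have hsqrtR : Real.sqrt (Fintype.card (Kgrp A)) = (Fintype.card A : ℝ) := by
    rw [hcard]
    push_cast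
    exact Real.sqrt_mul_self (by positivity)
  have hsqrt : ((Real.sqrt (Fintype.card (Kgrp A)) : ℝ) : ℂ) = (Fintype.card A : ℂ) := by
    rw [hsqrtR]
    norm_cast
  refine ⟨fun f u => by rw [hkey, hsqrt], ?_⟩
  intro δK εp εm
  have hδ : δK = (Fintype.card A : ℂ) • reflOp A := by
    ext f u
    exact hkey f u
  have hc0 : (Fintype.card A : ℂ) ≠ 0 := Nat.cast_ne_zero.mpr Fintype.card_ne_zero
  have hR : ((Real.sqrt (Fintype.card (Kgrp A)) : ℂ))⁻¹ • δK = reflOp A := by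
    rw [hδ, hsqrt, smul_smul, inv_mul_cancel₀ hc0, one_smul]
  have hεp : εp = (2⁻¹ : ℂ) • (1 + reflOp A) := by rw [← hR]
  have hεm : εm = (2⁻¹ : ℂ) • (1 - reflOp A) := by rw [← hR]
  have hR2 : reflOp A * reflOp A = 1 := reflOp_sq
  have e1 : (1 + reflOp A) * (1 + reflOp A) = (2 : ℂ) • (1 + reflOp A) := by
    rw [mul_add, mul_one, add_mul, one_mul, hR2, two_smul]
    abel
  have e2 : (1 - reflOp A) * (1 - reflOp A) = (2 : ℂ) • (1 - reflOp A) := by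
    rw [mul_sub, mul_one, sub_mul, one_mul, hR2, two_smul]
    abel
  have e3 : (1 + reflOp A) * (1 - reflOp A) = 0 := by
    rw [mul_sub, mul_one, add_mul, one_mul, hR2]
    abel
  have e4 : (1 - reflOp A) * (1 + reflOp A) = 0 := by
    rw [mul_add, mul_one, sub_mul, one_mul, hR2]
    abel
  have happ : ∀ (f : L2 A) (u : A),
      ((2⁻¹ : ℂ) • (1 + reflOp A)) f u = 2⁻¹ * (f u + f (-u)) := fun f u => rfl
  have happm : ∀ (f : L2 A) (u : A),
      ((2⁻¹ : ℂ) • (1 - reflOp A)) f u = 2⁻¹ * (f u - f (-u)) := fun f u => rfl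
  refine ⟨?_, ?_, ?_, ?_, ?_, ?_, ?_, ?_, ?_⟩
  · rw [hεp, smul_mul_smul_comm, e1, smul_smul]
    norm_num
  · rw [hεm, smul_mul_smul_comm, e2, smul_smul]
    norm_num
  · rw [hεp, hεm, smul_mul_smul_comm, e3, smul_zero]
  · rw [hεp, hεm, smul_mul_smul_comm, e4, smul_zero]
  · rw [hεp, hεm, ← smul_add]
    have : (1 + reflOp A) + (1 - reflOp A) = (2 : ℂ) • (1 : Module.End ℂ (L2 A)) := by
      rw [two_smul]; abel
    rw [this, smul_smul]
    norm_num
  · rw [hεp]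
    have hst : star ((2⁻¹ : ℂ) • (1 + reflOp A)) = (2⁻¹ : ℂ) • (1 + reflOp A) := by
      rw [star_smul, star_add, star_one, (reflOp_sa (A := A)).star_eq]
      norm_num [Complex.star_def]
    exact hst
  · rw [hεm]
    have hst : star ((2⁻¹ : ℂ) • (1 - reflOp A)) = (2⁻¹ : ℂ) • (1 - reflOp A) := by
      rw [star_smul, star_sub, star_one, (reflOp_sa (A := A)).star_eq]
      norm_num [Complex.star_def]
    exact hst
  · rw [hεp]
    ext f
    constructor
    · rintro ⟨g, rfl⟩
      intro u
      rw [happ, happ, neg_neg]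
      ring
    · intro hf
      have hf' : ∀ u : A, f (-u) = f u := hf
      exact ⟨f, by ext u; rw [happ, hf' u]; ring⟩
  · rw [hεm]
    ext f
    constructor
    · rintro ⟨g, rfl⟩
      intro u
      rw [happm, happm, neg_neg]
      ring
    · intro hf
      have hf' : ∀ u : A, f (-u) = -f u := hf
      exact ⟨f, by ext u; rw [happm, hf' u]; ring⟩
end
end
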